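/- Suppose in a labeled graph every node is 1-color or 2-color, every node is incident to at least one edge, and no two 2-color nodes are joined by an edge. Then for every prime p with p ≥ 2N there exists a storage code with source alphabet S = (Fin 3 → ZMod p) and coded alphabet T = (Fin 2 → ZMod p); in particular symbol rate 3/2 is achievable over such graphs. -/

import Mathlib

/-- A storage code problem over a labeled graph: `N` nodes, `K` sources, and a
symmetric labeling `t` of pairs of nodes by sources, with no self-loops. -/
structure LabeledGraph (N K : ℕ) where
  t : Fin N → Fin N → Option (Fin K)
  symm : ∀ i j, t i j = t j i
  irrefl : ∀ i, t i i = none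

/-- `V` is a storage code over `G`: from the coded symbols at the two endpoints of
any `W_k`-edge, the source symbol `W_k` can be decoded. -/
def IsStorageCode {N K : ℕ} (G : LabeledGraph N K) (S T : Type)
    (V : Fin N → (Fin K → S) → T) : Prop :=
  ∀ i j k, G.t i j = some k →
    ∃ D : T → T → S, ∀ w : Fin K → S, D (V i w) (V j w) = w k

/-- The set of source labels carried by the edges incident to node `i`. -/
def colorSet {N K : ℕ} (G : LabeledGraph N K) (i : Fin N) : Set (Fin K) :=
  {k | ∃ j, G.t i j = some k}

/-- Node `i` is `M`-color: its incident edges carry exactly `M` distinct labels. -/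
def IsMColor {N K : ℕ} (G : LabeledGraph N K) (i : Fin N) (M : ℕ) : Prop :=
  (colorSet G i).ncard = M


def qeval {p : ℕ} (v : Fin 3 → ZMod p) (x : ZMod p) : ZMod p :=
  v 0 + v 1 * x + v 2 * x ^ 2

lemma qeval_inj {p : ℕ} [Fact p.Prime] {x0 x1 x2 : ZMod p}
    (h01 : x0 ≠ x1) (h02 : x0 ≠ x2) (h12 : x1 ≠ x2) {v u : Fin 3 → ZMod p}
    (e0 : qeval v x0 = qeval u x0) (e1 : qeval v x1 = qeval u x1)
    (e2 : qeval v x2 = qeval u x2) : v = u := by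
  unfold qeval at e0 e1 e2
  have hx01 : x1 - x0 ≠ 0 := sub_ne_zero.2 (Ne.symm h01)
  have hx02 : x2 - x0 ≠ 0 := sub_ne_zero.2 (Ne.symm h02)
  have hx12 : x1 - x2 ≠ 0 := sub_ne_zero.2 h12
  have h1 : (v 1 - u 1) + (v 2 - u 2) * (x1 + x0) = 0 := by
    have h : (x1 - x0) * ((v 1 - u 1) + (v 2 - u 2) * (x1 + x0)) = 0 := by
      linear_combination e1 - e0
    exact (mul_eq_zero.1 h).resolve_left hx01
  have h2 : (v 1 - u 1) + (v 2 - u 2) * (x2 + x0) = 0 := by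
    have h : (x2 - x0) * ((v 1 - u 1) + (v 2 - u 2) * (x2 + x0)) = 0 := by
      linear_combination e2 - e0
    exact (mul_eq_zero.1 h).resolve_left hx02
  have hc : v 2 = u 2 := by
    have h : (x1 - x2) * (v 2 - u 2) = 0 := by linear_combination h1 - h2
    have := (mul_eq_zero.1 h).resolve_left hx12
    linear_combination this
  have hb : v 1 = u 1 := by linear_combination h1 - (x1 + x0) * hc
  have ha : v 0 = u 0 := by linear_combination e0 - x0 * hb - x0 ^ 2 * hc
  funext i
  fin_cases i <;> assumption

lemma exists_recover {p : ℕ} [Fact p.Prime] {x0 x1 x2 : ZMod p}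
    (h01 : x0 ≠ x1) (h02 : x0 ≠ x2) (h12 : x1 ≠ x2) :
    ∃ R : ZMod p → ZMod p → ZMod p → (Fin 3 → ZMod p),
      ∀ v, R (qeval v x0) (qeval v x1) (qeval v x2) = v := by
  classical
  let f : (Fin 3 → ZMod p) → ZMod p × ZMod p × ZMod p :=
    fun v => (qeval v x0, qeval v x1, qeval v x2)
  have hf : Function.Injective f := by
    intro v u h
    exact qeval_inj h01 h02 h12 (congrArg Prod.fst h)
      (congrArg (fun z => z.2.1) h) (congrArg (fun z => z.2.2) h)
  exact ⟨fun a b c => Function.invFun f (a, b, c),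
    fun v => Function.leftInverse_invFun hf v⟩

/-- if every node is `1`-color or `2`-color and no two `2`-color nodes are
adjacent, then for every prime `p ≥ 2N` there is a storage code with
`S = (Fin 3 → ZMod p)`, `T = (Fin 2 → ZMod p)`, i.e. rate `3/2` is achievable. -/
theorem rate_three_halves_achievable {N K : ℕ} (G : LabeledGraph N K)
    (h12 : ∀ i, IsMColor G i 1 ∨ IsMColor G i 2)
    (hno : ∀ i j, G.t i j ≠ none → ¬ (IsMColor G i 2 ∧ IsMColor G j 2))
    (p : ℕ) (hp : p.Prime) (hpN : 2 * N ≤ p) :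
    ∃ V : Fin N → (Fin K → (Fin 3 → ZMod p)) → (Fin 2 → ZMod p),
      IsStorageCode G (Fin 3 → ZMod p) (Fin 2 → ZMod p) V := by
  classical
  haveI := Fact.mk hp
  -- choose for each node the (at most two) colors at its two coordinates
  have hcol : ∀ i, ∃ f : Fin 2 → Fin K, colorSet G i = {f 0, f 1} := by
    intro i
    rcases h12 i with h | h
    · obtain ⟨a, ha⟩ := Set.ncard_eq_one.1 h
      exact ⟨![a, a], by simp [ha]⟩
    · obtain ⟨a, b, hab, hset⟩ := Set.ncard_eq_two.1 h
      exact ⟨![a, b], by simp [hset]⟩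
  choose c hc using hcol
  have h2col : ∀ i, c i 0 ≠ c i 1 → IsMColor G i 2 := by
    intro i h
    unfold IsMColor
    rw [hc i]
    exact Set.ncard_pair h
  -- evaluation points
  set xp : Fin N → Fin 2 → ZMod p := fun i m => ((2 * i.1 + m.1 : ℕ) : ZMod p) with hxp
  have hxlt : ∀ (i : Fin N) (m : Fin 2), 2 * i.1 + m.1 < p := by
    intro i m; have := i.2; have := m.2; omega
  have hxinj : ∀ i m j m', xp i m = xp j m' → i = j ∧ m = m' := by
    intro i m j m' h
    have h' : 2 * i.1 + m.1 = 2 * j.1 + m'.1 := by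
      have h2 := congrArg ZMod.val h
      rwa [hxp, ZMod.val_cast_of_lt (hxlt i m), ZMod.val_cast_of_lt (hxlt j m')] at h2
    have hm := m.2; have hm' := m'.2
    exact ⟨Fin.ext (by omega), Fin.ext (by omega)⟩
  -- the code
  refine ⟨fun i w m => qeval (w (c i m)) (xp i m), ?_⟩
  intro i j k hk
  have hij : i ≠ j := by
    rintro rfl
    rw [G.irrefl] at hk
    exact nomatch hk
  have hki : k ∈ colorSet G i := ⟨j, hk⟩
  have hkj : k ∈ colorSet G j := ⟨i, by rw [G.symm]; exact hk⟩
  rw [hc i] at hki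
  rw [hc j] at hkj
  simp only [Set.mem_insert_iff, Set.mem_singleton_iff] at hki hkj
  have hone : c i 0 = c i 1 ∨ c j 0 = c j 1 := by
    by_contra hcon
    push_neg at hcon
    exact hno i j (by rw [hk]; exact Option.some_ne_none k)
      ⟨h2col i hcon.1, h2col j hcon.2⟩
  have hne : ∀ (m m' : Fin 2), xp i m ≠ xp j m' := fun m m' h => hij (hxinj _ _ _ _ h).1
  have hself : ∀ (a : Fin N), xp a 0 ≠ xp a 1 := by
    intro a h
    have := (hxinj _ _ _ _ h).2
    exact absurd this (by decide)
  rcases hone with hcase | hcase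
  · -- i is 1-color: k = c i 0 = c i 1
    have hk0 : c i 0 = k := by rcases hki with h | h; exacts [h.symm, hcase.trans h.symm]
    have hk1 : c i 1 = k := hcase ▸ hk0
    obtain ⟨m', hm'⟩ : ∃ m' : Fin 2, c j m' = k := by
      rcases hkj with h | h
      · exact ⟨0, h.symm⟩
      · exact ⟨1, h.symm⟩
    obtain ⟨R, hR⟩ := exists_recover (hself i) (hne 0 m') (hne 1 m')
    refine ⟨fun a b => R (a 0) (a 1) (b m'), fun w => ?_⟩
    simp only [hk0, hk1, hm']
    exact hR (w k)
  · -- j is 1-color: k = c j 0 = c j 1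
    have hk0 : c j 0 = k := by rcases hkj with h | h; exacts [h.symm, hcase.trans h.symm]
    have hk1 : c j 1 = k := hcase ▸ hk0
    obtain ⟨m, hm⟩ : ∃ m : Fin 2, c i m = k := by
      rcases hki with h | h
      · exact ⟨0, h.symm⟩
      · exact ⟨1, h.symm⟩
    obtain ⟨R, hR⟩ := exists_recover (hself j) (hne m 0).symm (hne m 1).symm
    refine ⟨fun a b => R (b 0) (b 1) (a m), fun w => ?_⟩
    simp only [hk0, hk1, hm]
    exact hR (w k)
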